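/- Let O be the ring of integers of a finite extension of Q_p with uniformizer generating maximal ideal containing p, let M be a finite free O-module, and suppose f_1, …, f_t ∈ M are such that their reductions mod the maximal ideal are linearly independent, and [ℓ]f_i = λ_i f_i for elements λ_i ∈ O. If f := Σ_i f_i satisfies [ℓ]f ≡ λ·f (mod p^m M) for some λ ∈ O, then λ_i ≡ λ_j (mod p^m) for all i, j. -/

import Mathlib

/-!
STATEMENT 19: Let O be the ring of integers (integral closure of ℤ_p) of a finite
extension K of ℚ_p, M a finite free O-module (modelled as ι → O with ι finite), and
f_1, …, f_t ∈ M whose reductions modulo the maximal ideal are linearly independent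
(hindep).  Let A = [ℓ] be an O-linear operator with A f_i = λ_i f_i.  If
f := Σ_i f_i satisfies A f ≡ λ·f (mod p^m M) for some λ ∈ O, then
λ_i ≡ λ_j (mod p^m) for all i, j.
-/
set_option synthInstance.maxHeartbeats 1000000 in
set_option maxHeartbeats 1000000 in
theorem stmt19 (p : ℕ) [Fact p.Prime] (m : ℕ) (hm : 1 ≤ m)
    (K : Type) [Field K] [Algebra ℚ_[p] K] [FiniteDimensional ℚ_[p] K]
    [Algebra ℤ_[p] K] [IsScalarTower ℤ_[p] ℚ_[p] K]
    [IsLocalRing (integralClosure ℤ_[p] K)]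
    (ι : Type) [Fintype ι]
    (A : (ι → integralClosure ℤ_[p] K) →ₗ[integralClosure ℤ_[p] K]
        (ι → integralClosure ℤ_[p] K))
    (t : ℕ) (f : Fin t → (ι → integralClosure ℤ_[p] K))
    (lam : Fin t → integralClosure ℤ_[p] K)
    (heig : ∀ i, A (f i) = lam i • f i)
    (hindep : ∀ c : Fin t → integralClosure ℤ_[p] K,
      (∀ j : ι, (∑ i, c i * f i j) ∈ IsLocalRing.maximalIdeal (integralClosure ℤ_[p] K)) →
      ∀ i, c i ∈ IsLocalRing.maximalIdeal (integralClosure ℤ_[p] K))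
    (lam0 : integralClosure ℤ_[p] K)
    (hcong : ∀ j : ι,
      (p : integralClosure ℤ_[p] K) ^ m ∣
        (A (∑ i, f i) j - lam0 * (∑ i, f i) j)) :
    ∀ i i', (p : integralClosure ℤ_[p] K) ^ m ∣ (lam i - lam i') := by
  haveI hded : IsDedekindDomain (integralClosure ℤ_[p] K) :=
    integralClosure.isDedekindDomain ℤ_[p] ℚ_[p] K
  haveI : Algebra.IsIntegral ℤ_[p] (integralClosure ℤ_[p] K) :=
    IsIntegralClosure.isIntegral_algebra ℤ_[p] K
  have hinj : Function.Injective (algebraMap ℤ_[p] (integralClosure ℤ_[p] K)) := by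
    intro a b hab
    have h2 : algebraMap ℤ_[p] K a = algebraMap ℤ_[p] K b := by
      have := congrArg (Subtype.val) hab
      simpa using this
    rw [IsScalarTower.algebraMap_eq ℤ_[p] ℚ_[p] K] at h2
    exact (IsFractionRing.injective ℤ_[p] ℚ_[p]) ((algebraMap ℚ_[p] K).injective h2)
  have hnf : ¬IsField (integralClosure ℤ_[p] K) := fun hf =>
    (IsDiscreteValuationRing.not_isField ℤ_[p])
      ((Algebra.IsIntegral.isField_iff_isField hinj).mpr hf)
  haveI hdvr : IsDiscreteValuationRing (integralClosure ℤ_[p] K) :=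
    ((IsDiscreteValuationRing.TFAE (integralClosure ℤ_[p] K) hnf).out 0 2).mpr hded
  obtain ⟨π, hπ⟩ := IsDiscreteValuationRing.exists_irreducible (integralClosure ℤ_[p] K)
  -- key lemma: residual independence lifts to independence mod π^k
  have key : ∀ (k : ℕ) (c : Fin t → integralClosure ℤ_[p] K),
      (∀ j, π ^ k ∣ ∑ i, c i * f i j) → ∀ i, π ^ k ∣ c i := by
    intro k
    induction k with
    | zero => intro c _ i; simpa using one_dvd _
    | succ k ih =>
      intro c hc i
      have h1 : ∀ i, π ^ k ∣ c i :=
        ih c fun j => (pow_dvd_pow π (Nat.le_succ k)).trans (hc j)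
      choose d hd using h1
      have hπ0 : π ^ k ≠ 0 := pow_ne_zero _ hπ.ne_zero
      have h2 : ∀ j, π ∣ ∑ i, d i * f i j := by
        intro j
        have hsum : (∑ i, c i * f i j) = π ^ k * ∑ i, d i * f i j := by
          rw [Finset.mul_sum]
          exact Finset.sum_congr rfl fun i _ => by rw [hd i, mul_assoc]
        have h3 : π ^ k * π ∣ π ^ k * ∑ i, d i * f i j := by
          rw [← pow_succ, ← hsum]; exact hc j
        exact (mul_dvd_mul_iff_left hπ0).mp h3
      have h4 : ∀ j, (∑ i, d i * f i j) ∈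
          IsLocalRing.maximalIdeal (integralClosure ℤ_[p] K) := by
        intro j; rw [hπ.maximalIdeal_eq, Ideal.mem_span_singleton]; exact h2 j
      have h5 := hindep d h4 i
      rw [hπ.maximalIdeal_eq, Ideal.mem_span_singleton] at h5
      obtain ⟨e, he⟩ := h5
      exact ⟨e, by rw [hd i, he, pow_succ, mul_assoc]⟩
  -- rewrite the congruence as a sum
  have hsum : ∀ j, A (∑ i, f i) j - lam0 * (∑ i, f i) j
      = ∑ i, (lam i - lam0) * f i j := by
    intro j
    have hAf : ∀ i, A (f i) j = lam i * f i j := fun i => by rw [heig i]; rfl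
    calc A (∑ i, f i) j - lam0 * (∑ i, f i) j
        = (∑ i, A (f i) j) - ∑ i, lam0 * f i j := by
          rw [map_sum]; simp [Finset.sum_apply, Finset.mul_sum]
      _ = ∑ i, (lam i * f i j - lam0 * f i j) := by
          rw [← Finset.sum_sub_distrib]
          exact Finset.sum_congr rfl fun i _ => by rw [hAf i]
      _ = ∑ i, (lam i - lam0) * f i j := by simp [sub_mul]
  haveI : CharZero K := charZero_of_injective_algebraMap (algebraMap ℚ_[p] K).injective
  have p0 : (p : integralClosure ℤ_[p] K) ≠ 0 := by
    intro h
    have h2 : ((p : ℕ) : K) = 0 := by exact_mod_cast congrArg Subtype.val h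
    exact (Fact.out : p.Prime).ne_zero (Nat.cast_eq_zero.mp h2)
  obtain ⟨e, u, hpu⟩ := IsDiscreteValuationRing.eq_unit_mul_pow_irreducible p0 hπ
  have hpm : (p : integralClosure ℤ_[p] K) ^ m = ↑(u ^ m) * π ^ (e * m) := by
    rw [hpu, mul_pow, ← pow_mul, Units.val_pow_eq_pow_val]
  have hdvd : ∀ j, π ^ (e * m) ∣ ∑ i, (lam i - lam0) * f i j := by
    intro j
    have h := hcong j
    rw [hsum j, hpm, Units.mul_left_dvd] at h
    exact h
  have hfin : ∀ i, (p : integralClosure ℤ_[p] K) ^ m ∣ lam i - lam0 := by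
    intro i
    rw [hpm, Units.mul_left_dvd]
    exact key (e * m) _ hdvd i
  intro i i'
  have := dvd_sub (hfin i) (hfin i')
  simpa [sub_sub_sub_cancel_right] using this
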